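/- Let d ≥ 1 and let p ∈ MvPolynomial (Fin d) ℝ have totalDegree p < d. If p(u)·parity(u) ≥ 0 for every cube point u ∈ {−1,1}^d, then p(u) = 0 for every cube point u. (No polynomial of total degree less than d weakly represents the parity function on d bits.) -/
import Mathlib

/-- `u` is a point of the cube `{−1,1}^d`. -/
def Cube {d : ℕ} (u : Fin d → ℝ) : Prop := ∀ i, u i = 1 ∨ u i = -1

noncomputable def chi {d : ℕ} (s : Fin d → Bool) : Fin d → ℝ := fun i => if s i then 1 else -1

lemma cube_chi {d : ℕ} (s : Fin d → Bool) : Cube (chi s) := by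
  intro i; unfold chi; split <;> simp

lemma sum_zero {d : ℕ} (hd : 1 ≤ d) (p : MvPolynomial (Fin d) ℝ) (hdeg : p.totalDegree < d) :
    ∑ s : Fin d → Bool, MvPolynomial.eval (chi s) p * ∏ i, chi s i = 0 := by
  have heval : ∀ s : Fin d → Bool, MvPolynomial.eval (chi s) p * ∏ i, chi s i
      = ∑ m ∈ p.support, p.coeff m * ∏ i, chi s i ^ (m i + 1) := by
    intro s
    rw [MvPolynomial.eval_eq', Finset.sum_mul]
    refine Finset.sum_congr rfl fun m _ => ?_
    rw [mul_assoc, ← Finset.prod_mul_distrib]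
    simp [pow_succ]
  simp_rw [heval]
  rw [Finset.sum_comm]
  refine Finset.sum_eq_zero fun m hm => ?_
  rw [← Finset.mul_sum]
  have hex : ∃ i, m i = 0 := by
    by_contra hc
    push_neg at hc
    have : d ≤ m.sum fun _ e => e := by
      calc d = ∑ _i : Fin d, 1 := by simp
        _ ≤ ∑ i : Fin d, m i := Finset.sum_le_sum fun i _ => Nat.one_le_iff_ne_zero.2 (hc i)
        _ = m.sum fun _ e => e := by rw [Finsupp.sum_fintype]; intro; rfl
    have := le_trans this (MvPolynomial.le_totalDegree hm)
    omega
  obtain ⟨i0, hi0⟩ := hex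
  have : ∑ s : Fin d → Bool, ∏ i, chi s i ^ (m i + 1)
      = ∏ i, ∑ b : Bool, (if b then (1:ℝ) else -1) ^ (m i + 1) := by
    rw [Fintype.prod_sum]
    rfl
  rw [this]
  rw [Finset.prod_eq_zero (Finset.mem_univ i0)]
  · ring
  · simp [hi0]

theorem no_weak_representation_of_parity {d : ℕ} (hd : 1 ≤ d)
    (p : MvPolynomial (Fin d) ℝ) (hdeg : p.totalDegree < d)
    (h : ∀ u : Fin d → ℝ, Cube u → 0 ≤ MvPolynomial.eval u p * ∏ i, u i) :
    ∀ u : Fin d → ℝ, Cube u → MvPolynomial.eval u p = 0 := by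
  intro u hu
  have hzero : ∀ s : Fin d → Bool, MvPolynomial.eval (chi s) p * ∏ i, chi s i = 0 := by
    have := (Finset.sum_eq_zero_iff_of_nonneg
      (fun s _ => h (chi s) (cube_chi s))).1 (sum_zero hd p hdeg)
    exact fun s => this s (Finset.mem_univ s)
  set s : Fin d → Bool := fun i => u i = 1 with hs
  have hus : u = chi s := by
    funext i
    rcases hu i with h1 | h1 <;> simp [chi, hs, h1] <;> norm_num
  have hp : (∏ i, u i) ≠ 0 := by
    refine Finset.prod_ne_zero_iff.2 fun i _ => ?_
    rcases hu i with h1 | h1 <;> rw [h1] <;> norm_num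
  have := hzero s
  rw [← hus] at this
  exact (mul_eq_zero.1 this).resolve_right hp
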